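/- (Theorem 4.1(i), Abelian Networks Solve Monotone Integer Programs) Let N be an abelian network with finite total alphabet A, let x ∈ ℕ^A, q ∈ Q, and define F : ℕ^A → ℕ^A by F(u) = x + N(u,q). If N halts on input x.q, then the odometer u = [x.q] is the least element of the feasible set {u ∈ ℕ^A : F(u) ≤ u}; consequently, for every c ∈ ℝ^A with all coordinates positive, [x.q] is the unique minimizer of cᵀu subject to u ∈ ℕ^A and F(u) ≤ u. -/

import Mathlib

/-- The letter-count vector `|w| ∈ ℕ^A` of a word `w ∈ A^*`. -/
def lc {A : Type*} [DecidableEq A] (w : List A) : A → ℕ := fun a => w.count a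

/-- An abelian-network *data* structure on a directed graph with vertex set `V`, edge set `E`
(with source and target maps, allowing loops and multiple edges), total alphabet
`A = ⊔_v A_v` (the letter `a` belongs to the alphabet of the vertex `loc a`), and
state space `Q v` for the processor at vertex `v`.  The abelian hypothesis on the
processors is the separate predicate `AbelianNetwork.IsAbelian`. -/
structure AbelianNetwork (V E A : Type*) (Q : V → Type*) [DecidableEq V] [DecidableEq A] where
  /-- source of an edge -/
  src : E → V
  /-- target of an edge -/
  tgt : E → V
  /-- the vertex whose input alphabet contains the letter `a` -/
  loc : A → V
  /-- the (finitely many) outgoing edges of each vertex -/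
  outEdges : V → Finset E
  mem_outEdges : ∀ (e : E) (v : V), e ∈ outEdges v ↔ src e = v
  /-- single-letter transition function `T_v(a, ·)` of the processor at `v = loc a` -/
  trans : (a : A) → Q (loc a) → Q (loc a)
  /-- message-passing function: the word sent along the edge `e` (with `src e = loc a`)
  when the processor at `loc a` processes the letter `a` in state `q` -/
  msg : (e : E) → (a : A) → Q (loc a) → List A
  /-- letters sent along `e` belong to the alphabet of the target of `e` -/
  msg_tgt : ∀ (e : E) (a : A) (q : Q (loc a)), src e = loc a → ∀ b ∈ msg e a q, loc b = tgt e

namespace AbelianNetwork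

variable {V E A : Type*} {Q : V → Type*} [DecidableEq V] [DecidableEq A]
variable (N : AbelianNetwork V E A Q)

/-- The map `t_a : Q → Q` updating the `loc a` coordinate by `T_{loc a}(a, ·)` and
fixing all other coordinates. -/
def tact (a : A) (q : ∀ v, Q v) : ∀ v, Q v :=
  Function.update q (N.loc a) (N.trans a (q (N.loc a)))

/-- `t_w = t_{w_r} ∘ ⋯ ∘ t_{w_1}` for a word `w = w_1 ⋯ w_r`. -/
def tword (w : List A) (q : ∀ v, Q v) : ∀ v, Q v :=
  w.foldl (fun q a => N.tact a q) q

/-- The word sent along the edge `e` when the letters of `w` are processed in order,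
starting from the global state `q`.  (Extends the message-passing functions to words.) -/
def msgword (e : E) : List A → (∀ v, Q v) → List A
  | [], _ => []
  | a :: w, q =>
      (if N.src e = N.loc a then N.msg e a (q (N.loc a)) else []) ++ msgword e w (N.tact a q)

/-- `N(a, q_{loc a}) ∈ ℕ^A`: the vector counting the letters produced when the processor at
`loc a` processes the letter `a`, summed over the outgoing edges of `loc a`. -/
def Nletter (a : A) (q : ∀ v, Q v) : A → ℕ := fun b =>
  ∑ e ∈ N.outEdges (N.loc a), (N.msg e a (q (N.loc a))).count b

/-- `N(w, q) = ∑_i N(w_i, q^{i-1}_{v(i)})` for a word `w = w_1 ⋯ w_r`. -/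
def Nword : List A → (∀ v, Q v) → A → ℕ
  | [], _ => fun _ => 0
  | a :: w, q => fun b => N.Nletter a q b + Nword w (N.tact a q) b

/-- The network is *abelian*: permuting a word input to a single processor does not change
the resulting state and changes each output word only by permuting its letters. -/
def IsAbelian : Prop :=
  ∀ (v : V) (w w' : List A), (∀ a ∈ w, N.loc a = v) → (∀ a ∈ w', N.loc a = v) →
    (w : Multiset A) = (w' : Multiset A) →
    ∀ q : ∀ u, Q u,
      N.tword w q = N.tword w' q ∧
      ∀ e : E, ((N.msgword e w q : Multiset A) = (N.msgword e w' q : Multiset A))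

/-- The state transition `π_a(x.q) = (x - 1_a + N(a, q_{loc a})).t_a(q)` of the whole
network, viewed as a single automaton with states `x.q ∈ ℤ^A × Q`. -/
def piLetter (a : A) (s : (A → ℤ) × (∀ v, Q v)) : (A → ℤ) × (∀ v, Q v) :=
  (fun b => s.1 b - (if b = a then 1 else 0) + (N.Nletter a s.2 b : ℤ), N.tact a s.2)

/-- `π_w = π_{w_r} ∘ ⋯ ∘ π_{w_1}`. -/
def piWord (w : List A) (s : (A → ℤ) × (∀ v, Q v)) : (A → ℤ) × (∀ v, Q v) :=
  w.foldl (fun s a => N.piLetter a s) s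

/-- The word `w` is a *legal execution* from `x.q`: each letter is a legal move
(`x_a ≥ 1`) from the state obtained by executing the previous letters. -/
def Legal : List A → ((A → ℤ) × (∀ v, Q v)) → Prop
  | [], _ => True
  | a :: w, s => 1 ≤ s.1 a ∧ Legal w (N.piLetter a s)

/-- The word `w` is a *complete execution* from `x.q`: after executing `w`,
no letters remain to be processed. -/
def Complete (w : List A) (s : (A → ℤ) × (∀ v, Q v)) : Prop :=
  ∀ a : A, (N.piWord w s).1 a ≤ 0

/-- A canonical word with letter-count vector `u ∈ ℕ^A`. -/
noncomputable def vecWord [Fintype A] (u : A → ℕ) : List A :=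
  (Finset.univ : Finset A).toList.flatMap fun a => List.replicate (u a) a

/-- `N(u, q)` for a vector `u ∈ ℕ^A`, defined as `N(w, q)` for a word `w` with `|w| = u`. -/
noncomputable def Nvec [Fintype A] (u : A → ℕ) (q : ∀ v, Q v) : A → ℕ := N.Nword (vecWord u) q

end AbelianNetwork

namespace AbelianNetwork

variable {V E A : Type*} {Q : V → Type*} [DecidableEq V] [DecidableEq A]
variable (N : AbelianNetwork V E A Q)

lemma tword_cons (a : A) (w : List A) (q : ∀ v, Q v) :
    N.tword (a :: w) q = N.tword w (N.tact a q) := rfl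

lemma tact_apply_ne (a : A) (q : ∀ v, Q v) {v : V} (h : v ≠ N.loc a) :
    N.tact a q v = q v := Function.update_of_ne h _ _

lemma Nletter_congr (a : A) {q q' : ∀ v, Q v} (h : q (N.loc a) = q' (N.loc a)) :
    N.Nletter a q = N.Nletter a q' := by
  funext b; simp only [Nletter, h]

lemma Nword_eq_sum_msgword (v : V) (w : List A) (hw : ∀ a ∈ w, N.loc a = v)
    (q : ∀ u, Q u) (b : A) :
    N.Nword w q b = ∑ e ∈ N.outEdges v, (N.msgword e w q).count b := by
  induction w generalizing q with
  | nil => simp [Nword, msgword]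
  | cons a w ih =>
    have ha : N.loc a = v := hw a (List.mem_cons_self (a := a) (l := w))
    have hsum : ∀ e ∈ N.outEdges v,
        (N.msgword e (a :: w) q).count b
          = (N.msg e a (q (N.loc a))).count b + (N.msgword e w (N.tact a q)).count b := by
      intro e he
      have hsrc : N.src e = N.loc a := by rw [(N.mem_outEdges e v).mp he, ha]
      simp only [msgword, if_pos hsrc, List.count_append]
    rw [Finset.sum_congr rfl hsum, Finset.sum_add_distrib,
      ← ih (fun x hx => hw x (List.mem_cons_of_mem a hx)) (N.tact a q)]
    simp only [Nword, Nletter]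
    congr 1
    exact Finset.sum_congr (by rw [ha]) (fun e _ => rfl)

lemma tact_comm (a b : A) (q : ∀ v, Q v) (hN : N.IsAbelian) :
    N.tact b (N.tact a q) = N.tact a (N.tact b q) := by
  rcases eq_or_ne (N.loc a) (N.loc b) with h | h
  · have hw : ∀ x ∈ [a, b], N.loc x = N.loc a := by
      intro x hx
      simp only [List.mem_cons, List.mem_singleton, List.not_mem_nil, or_false] at hx
      rcases hx with rfl | rfl
      · rfl
      · exact h.symm
    have hw' : ∀ x ∈ [b, a], N.loc x = N.loc a := by
      intro x hx
      simp only [List.mem_cons, List.mem_singleton, List.not_mem_nil, or_false] at hx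
      rcases hx with rfl | rfl
      · exact h.symm
      · rfl
    exact (hN (N.loc a) [a, b] [b, a] hw hw'
      (Multiset.coe_eq_coe.mpr (List.Perm.swap b a [])) q).1
  · have e1 : (N.tact a q) (N.loc b) = q (N.loc b) := N.tact_apply_ne a _ (Ne.symm h)
    have e2 : (N.tact b q) (N.loc a) = q (N.loc a) := N.tact_apply_ne b _ h
    show Function.update (N.tact a q) (N.loc b) (N.trans b ((N.tact a q) (N.loc b)))
        = Function.update (N.tact b q) (N.loc a) (N.trans a ((N.tact b q) (N.loc a)))
    rw [e1, e2]
    exact Function.update_comm h _ _ _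

lemma Nletter_swap (a b : A) (q : ∀ v, Q v) (hN : N.IsAbelian) (b' : A) :
    N.Nletter a q b' + N.Nletter b (N.tact a q) b'
      = N.Nletter b q b' + N.Nletter a (N.tact b q) b' := by
  rcases eq_or_ne (N.loc a) (N.loc b) with h | h
  · have hw : ∀ x ∈ [a, b], N.loc x = N.loc a := by
      intro x hx
      simp only [List.mem_cons, List.mem_singleton, List.not_mem_nil, or_false] at hx
      rcases hx with rfl | rfl
      · rfl
      · exact h.symm
    have hw' : ∀ x ∈ [b, a], N.loc x = N.loc a := by
      intro x hx
      simp only [List.mem_cons, List.mem_singleton, List.not_mem_nil, or_false] at hx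
      rcases hx with rfl | rfl
      · exact h.symm
      · rfl
    have hmsg := (hN (N.loc a) [a, b] [b, a] hw hw'
      (Multiset.coe_eq_coe.mpr (List.Perm.swap b a [])) q).2
    have h1 := N.Nword_eq_sum_msgword (N.loc a) [a, b] hw q b'
    have h2 := N.Nword_eq_sum_msgword (N.loc a) [b, a] hw' q b'
    have hc : ∀ e, (N.msgword e [a, b] q).count b' = (N.msgword e [b, a] q).count b' := by
      intro e
      exact (Multiset.coe_eq_coe.mp (hmsg e)).count_eq b'
    simp only [Nword] at h1 h2
    rw [Finset.sum_congr rfl (fun e _ => hc e)] at h1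
    omega
  · rw [N.Nletter_congr b (q' := q) (N.tact_apply_ne a _ h.symm),
      N.Nletter_congr a (q' := q) (N.tact_apply_ne b _ h)]
    omega

lemma perm_lemma (hN : N.IsAbelian) {w w' : List A} (hp : w.Perm w') (q : ∀ v, Q v) :
    N.tword w q = N.tword w' q ∧ N.Nword w q = N.Nword w' q := by
  induction hp generalizing q with
  | nil => exact ⟨rfl, rfl⟩
  | cons a h ih =>
    obtain ⟨h1, h2⟩ := ih (N.tact a q)
    refine ⟨h1, ?_⟩
    funext b
    simp only [Nword]
    rw [congrFun h2 b]
  | swap x y l =>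
    have hc := N.tact_comm y x q hN
    constructor
    · show N.tword l (N.tact x (N.tact y q)) = N.tword l (N.tact y (N.tact x q))
      rw [hc]
    · funext b
      simp only [Nword]
      rw [hc]
      have := N.Nletter_swap y x q hN b
      omega
  | trans h1 h2 ih1 ih2 =>
    obtain ⟨a1, a2⟩ := ih1 q
    obtain ⟨b1, b2⟩ := ih2 q
    exact ⟨a1.trans b1, a2.trans b2⟩

lemma lc_vecWord [Fintype A] (u : A → ℕ) : lc (vecWord u) = u := by
  funext a
  simp only [lc, vecWord, List.count_flatMap]
  have : ∀ b : A, (List.count a ∘ fun b => List.replicate (u b) b) b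
      = if b = a then u b else 0 := by
    intro b
    show List.count a (List.replicate (u b) b) = _
    rw [List.count_replicate]
    rcases eq_or_ne a b with rfl | hab
    · simp
    · simp [hab, Ne.symm hab]
  rw [List.map_congr_left (fun b _ => this b)]
  rw [Finset.sum_map_toList Finset.univ (fun b => if b = a then u b else 0)]
  simp

lemma vecWord_perm [Fintype A] (w : List A) : (vecWord (lc w)).Perm w := by
  rw [List.perm_iff_count]
  intro a
  have := congrFun (lc_vecWord (lc w)) a
  simpa [lc] using this

lemma Nvec_eq_Nword [Fintype A] (hN : N.IsAbelian) (w : List A) (q : ∀ v, Q v) :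
    N.Nvec (lc w) q = N.Nword w q := by
  rw [Nvec]
  exact (N.perm_lemma hN (vecWord_perm w) q).2

lemma Nword_append (p r : List A) (q : ∀ v, Q v) (b : A) :
    N.Nword (p ++ r) q b = N.Nword p q b + N.Nword r (N.tword p q) b := by
  induction p generalizing q with
  | nil => simp [Nword, tword]
  | cons a p ih =>
    simp only [List.cons_append, Nword, tword_cons, List.append_eq]
    rw [ih]
    omega

lemma Nword_mono [Fintype A] (hN : N.IsAbelian) {p : List A} {u : A → ℕ}
    (h : lc p ≤ u) (q : ∀ v, Q v) (b : A) : N.Nword p q b ≤ N.Nvec u q b := by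
  set r := vecWord (fun a => u a - lc p a) with hr
  have hlc : lc (p ++ r) = u := by
    funext a
    have h1 : lc r a = u a - lc p a := by
      rw [hr]; exact congrFun (lc_vecWord (fun a => u a - lc p a)) a
    have h2 : lc (p ++ r) a = lc p a + lc r a := List.count_append (a := a) (l₁ := p) (l₂ := r)
    have h3 : lc p a ≤ u a := h a
    rw [h2, h1]
    omega
  have hperm : (vecWord u).Perm (p ++ r) := by
    rw [List.perm_iff_count]
    intro a
    have e1 := congrFun (lc_vecWord u) a
    have e2 := congrFun hlc a
    simp only [lc] at e1 e2
    omega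
  have := (N.perm_lemma hN hperm q).2
  rw [Nvec, this, N.Nword_append p r q b]
  omega

lemma piWord_fst (w : List A) (s : (A → ℤ) × (∀ v, Q v)) (b : A) :
    (N.piWord w s).1 b = s.1 b - lc w b + N.Nword w s.2 b := by
  induction w generalizing s with
  | nil => simp [piWord, lc, Nword]
  | cons a w ih =>
    have : N.piWord (a :: w) s = N.piWord w (N.piLetter a s) := rfl
    rw [this, ih]
    simp only [piLetter, Nword, lc, List.count_cons]
    push_cast
    rcases eq_or_ne b a with rfl | hb
    · simp; ring
    · simp [hb, Ne.symm hb]; ring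

lemma piWord_snd (w : List A) (s : (A → ℤ) × (∀ v, Q v)) :
    (N.piWord w s).2 = N.tword w s.2 := by
  induction w generalizing s with
  | nil => rfl
  | cons a w ih =>
    have : N.piWord (a :: w) s = N.piWord w (N.piLetter a s) := rfl
    rw [this, ih]
    rfl

lemma piWord_append (p r : List A) (s : (A → ℤ) × (∀ v, Q v)) :
    N.piWord (p ++ r) s = N.piWord r (N.piWord p s) := by
  simp [piWord, List.foldl_append]

end AbelianNetwork

namespace AbelianNetwork

variable {V E A : Type*} {Q : V → Type*} [DecidableEq V] [DecidableEq A]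
variable (N : AbelianNetwork V E A Q)

lemma legal_lb [Fintype A] (hN : N.IsAbelian) (x : A → ℕ) (q : ∀ v, Q v) (u : A → ℕ)
    (hu : ∀ a, x a + N.Nvec u q a ≤ u a) (w : List A) :
    ∀ p : List A, N.Legal w (N.piWord p (fun a => (x a : ℤ), q)) → lc p ≤ u →
      lc (p ++ w) ≤ u := by
  induction w with
  | nil => intro p _ hp; simpa using hp
  | cons a w ih =>
    intro p hleg hp
    obtain ⟨h1, h2⟩ : 1 ≤ (N.piWord p (fun a => (x a : ℤ), q)).1 a ∧
        N.Legal w (N.piLetter a (N.piWord p (fun a => (x a : ℤ), q))) := hleg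
    have hfst : (N.piWord p (fun a => (x a : ℤ), q)).1 a
        = (x a : ℤ) - lc p a + N.Nword p q a := N.piWord_fst p _ a
    have hmono : N.Nword p q a ≤ N.Nvec u q a := N.Nword_mono hN hp q a
    have hpa : lc p a + 1 ≤ u a := by
      rw [hfst] at h1
      have := hu a
      omega
    have hpa' : lc (p ++ [a]) ≤ u := by
      intro b
      have hb : lc (p ++ [a]) b = lc p b + if a = b then 1 else 0 := by
        simp only [lc, List.count_append]
        congr 1
        rcases eq_or_ne a b with rfl | hne
        · simp
        · simp [hne, List.count_singleton', if_neg hne]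
      rcases eq_or_ne a b with rfl | hne
      · rw [hb, if_pos rfl]; exact hpa
      · rw [hb, if_neg hne]; simpa using hp b
    have hstep : N.piLetter a (N.piWord p (fun a => (x a : ℤ), q))
        = N.piWord (p ++ [a]) (fun a => (x a : ℤ), q) := by
      rw [N.piWord_append]; rfl
    have hres := ih (p ++ [a]) (hstep ▸ h2) hpa'
    have : (p ++ [a]) ++ w = p ++ (a :: w) := by simp
    rwa [this] at hres

end AbelianNetwork

/-- **Theorem 4.1(i) (Abelian Networks Solve Monotone Integer Programs).** Let `N` be an
abelian network with finite total alphabet `A`, let `x ∈ ℕ^A`, `q ∈ Q`, and define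
`F(u) = x + N(u,q)`.  If `N` halts on input `x.q`, then the odometer `[x.q]` (which is
`|w|` for any complete legal execution `w`) is the least element of the feasible set
`{u ∈ ℕ^A : F(u) ≤ u}`; consequently, for every `c ∈ ℝ^A` with all coordinates positive,
`[x.q]` is the unique minimizer of `cᵀu` subject to `u ∈ ℕ^A` and `F(u) ≤ u`. -/
theorem AbelianNetwork.solves_MIP {V E A : Type*} {Q : V → Type*}
    [DecidableEq V] [DecidableEq A] [Fintype A]
    (N : AbelianNetwork V E A Q) (hN : N.IsAbelian) (x : A → ℕ) (q : ∀ v, Q v)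
    (w : List A)
    (hwl : N.Legal w (fun a => (x a : ℤ), q))
    (hwc : N.Complete w (fun a => (x a : ℤ), q)) :
    ((fun a => x a + N.Nvec (lc w) q a) ≤ lc w ∧
      (∀ u : A → ℕ, (fun a => x a + N.Nvec u q a) ≤ u → lc w ≤ u)) ∧
    ∀ c : A → ℝ, (∀ a, 0 < c a) →
      ∀ u : A → ℕ, (fun a => x a + N.Nvec u q a) ≤ u →
        (∑ a, c a * (lc w a : ℝ) ≤ ∑ a, c a * (u a : ℝ)) ∧
        (∑ a, c a * (u a : ℝ) = ∑ a, c a * (lc w a : ℝ) → u = lc w) := by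
  have hNv : N.Nvec (lc w) q = N.Nword w q := N.Nvec_eq_Nword hN w q
  have hfeas : (fun a => x a + N.Nvec (lc w) q a) ≤ lc w := by
    intro a
    have hc := hwc a
    have hfst : (N.piWord w (fun a => (x a : ℤ), q)).1 a
        = (x a : ℤ) - lc w a + N.Nword w q a := N.piWord_fst w _ a
    rw [hfst] at hc
    have : x a + N.Nvec (lc w) q a ≤ lc w a := by rw [hNv]; omega
    exact this
  have hleast : ∀ u : A → ℕ, (fun a => x a + N.Nvec u q a) ≤ u → lc w ≤ u := by
    intro u hu
    have hu' : ∀ a, x a + N.Nvec u q a ≤ u a := fun a => hu a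
    have h0 : lc ([] : List A) ≤ u := by intro a; simp [lc]
    have := N.legal_lb hN x q u hu' w [] hwl h0
    simpa using this
  refine ⟨⟨hfeas, hleast⟩, ?_⟩
  intro c hc u hu
  have hle : lc w ≤ u := hleast u hu
  have hterm : ∀ a ∈ (Finset.univ : Finset A),
      c a * (lc w a : ℝ) ≤ c a * (u a : ℝ) := by
    intro a _
    exact mul_le_mul_of_nonneg_left (by exact_mod_cast hle a) (hc a).le
  refine ⟨Finset.sum_le_sum hterm, ?_⟩
  intro heq
  funext a
  have := (Finset.sum_eq_sum_iff_of_le hterm).mp heq.symm a (Finset.mem_univ a)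
  have hca : (lc w a : ℝ) = (u a : ℝ) := mul_left_cancel₀ (hc a).ne' this
  exact_mod_cast hca.symm
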